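/- Let a = (a₁, …, a_n) ∈ ℝⁿ be a nonzero vector and b = (δ₁a₁, …, δ_n a_n) where δ₁, …, δ_n are i.i.d. Bernoulli(p) random variables. If p ≥ (256/9)·‖a‖_∞²/‖a‖₂², then with probability at least 0.996, (√p/2)·‖a‖₂ ≤ ‖b‖₂ ≤ (√(7p)/2)·‖a‖₂. -/

import Mathlib

open MeasureTheory ProbabilityTheory
set_option maxHeartbeats 1000000

lemma exp_num_bound : Real.exp (-(51/8) : ℝ) ≤ 1/500 := by
  have h1 : Real.exp ((51:ℝ)/8) = (Real.exp 1)^6 * Real.exp (3/8) := by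
    rw [← Real.exp_nat_mul, ← Real.exp_add]; norm_num
  have h2 : (2.7182818283:ℝ) ≤ Real.exp 1 := Real.exp_one_gt_d9.le
  have h3 : (2.7182818283:ℝ)^6 ≤ (Real.exp 1)^6 := pow_le_pow_left₀ (by norm_num) h2 6
  have h4 : (1 + 3/8 : ℝ) ≤ Real.exp (3/8) := by linarith [Real.add_one_le_exp (3/8:ℝ)]
  have h500 : (500:ℝ) ≤ Real.exp ((51:ℝ)/8) := by
    rw [h1]
    nlinarith [h3, h4, Real.exp_pos (3/8:ℝ),
      pow_pos (lt_of_lt_of_le (by norm_num : (0:ℝ) < 2.7182818283) h2) 6]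
  rw [Real.exp_neg, one_div]
  exact inv_anti₀ (by norm_num) h500
lemma exp_cubic_bound {x : ℝ} (hx : |x| ≤ 1) :
    Real.exp x ≤ 1 + x + x ^ 2 / 2 + (2 / 9) * |x| ^ 3 := by
  have h := Real.exp_bound hx (n := 3) (by norm_num)
  have hsum : ∑ m ∈ Finset.range 3, x ^ m / m.factorial = 1 + x + x ^ 2 / 2 := by
    norm_num [Finset.sum_range_succ, Nat.factorial]
  rw [hsum] at h
  norm_num [Nat.factorial] at h
  nlinarith [(abs_sub_le_iff.1 h).1]

lemma two_point_bound (p x₀ x₁ C : ℝ) (hp0 : 0 ≤ p) (hp1 : p ≤ 1)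
    (habs0 : |x₀| ≤ 9 / 16) (habs1 : |x₁| ≤ 9 / 16)
    (hlin : (1 - p) * x₀ + p * x₁ = 0) (hquad : (1 - p) * x₀ ^ 2 + p * x₁ ^ 2 ≤ C) :
    (1 - p) * Real.exp x₀ + p * Real.exp x₁ ≤ Real.exp ((5 / 8) * C) := by
  have he0 := exp_cubic_bound (x := x₀) (by linarith)
  have he1 := exp_cubic_bound (x := x₁) (by linarith)
  have hcube0 : |x₀| ^ 3 ≤ (9 / 16) * x₀ ^ 2 := by
    have h : |x₀| ^ 3 = |x₀| * x₀ ^ 2 := by rw [← sq_abs]; ring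
    rw [h]; exact mul_le_mul_of_nonneg_right habs0 (sq_nonneg _)
  have hcube1 : |x₁| ^ 3 ≤ (9 / 16) * x₁ ^ 2 := by
    have h : |x₁| ^ 3 = |x₁| * x₁ ^ 2 := by rw [← sq_abs]; ring
    rw [h]; exact mul_le_mul_of_nonneg_right habs1 (sq_nonneg _)
  have h0 : (1 - p) * Real.exp x₀ ≤ (1 - p) * (1 + x₀ + x₀ ^ 2 / 2 + (2 / 9) * |x₀| ^ 3) :=
    mul_le_mul_of_nonneg_left he0 (by linarith)
  have h1 : p * Real.exp x₁ ≤ p * (1 + x₁ + x₁ ^ 2 / 2 + (2 / 9) * |x₁| ^ 3) :=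
    mul_le_mul_of_nonneg_left he1 hp0
  have hc0 : (1 - p) * |x₀| ^ 3 ≤ (1 - p) * ((9 / 16) * x₀ ^ 2) :=
    mul_le_mul_of_nonneg_left hcube0 (by linarith)
  have hc1 : p * |x₁| ^ 3 ≤ p * ((9 / 16) * x₁ ^ 2) :=
    mul_le_mul_of_nonneg_left hcube1 hp0
  have hfin : (1 - p) * Real.exp x₀ + p * Real.exp x₁ ≤ 1 + (5 / 8) * C := by
    nlinarith [h0, h1, hc0, hc1, hquad, hlin]
  have := Real.add_one_le_exp ((5 / 8) * C)
  linarith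

lemma delta_integral {Ω : Type*} [MeasurableSpace Ω] (μm : Measure Ω)
    [IsProbabilityMeasure μm] {p : ℝ} (hp0 : 0 ≤ p)
    (d : Ω → ℝ) (hmeas : Measurable d) (hval : ∀ ω, d ω = 0 ∨ d ω = 1)
    (hber : μm {ω | d ω = 1} = ENNReal.ofReal p) :
    ∫ ω, d ω ∂μm = p := by
  have hsm : MeasurableSet {ω | d ω = 1} := hmeas (measurableSet_singleton 1)
  have hd : d = Set.indicator {ω | d ω = 1} (fun _ => (1 : ℝ)) := by
    funext ω
    rcases hval ω with h | h <;> simp [Set.indicator_apply, h]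
  rw [hd, integral_indicator_const (1 : ℝ) hsm, measureReal_def, hber, smul_eq_mul, mul_one,
    ENNReal.toReal_ofReal hp0]

lemma chernoff_aux {Ω : Type*} [MeasurableSpace Ω] (μm : Measure Ω)
    [IsProbabilityMeasure μm] {n : ℕ} {p : ℝ} (hp0 : 0 ≤ p) (hp1 : p ≤ 1)
    (δ : Fin n → Ω → ℝ)
    (hmeas : ∀ k, Measurable (δ k))
    (hval : ∀ k ω, δ k ω = 0 ∨ δ k ω = 1)
    (hber : ∀ k, μm {ω | δ k ω = 1} = ENNReal.ofReal p)
    (hindep : iIndepFun δ μm)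
    (c : Fin n → ℝ) (s : ℝ) (hs : 0 ≤ s) (hsc : ∀ k, s * |c k| ≤ 9 / 16) (t : ℝ) :
    (μm {ω | t ≤ ∑ k, (δ k ω - p) * c k}).toReal ≤
      Real.exp (-s * t + (5 / 8) * s ^ 2 * p * (∑ k, (c k) ^ 2)) := by
  set X : Fin n → Ω → ℝ := fun k ω => (δ k ω - p) * c k with hX
  have hXmeas : ∀ k, Measurable (X k) := fun k => ((hmeas k).sub_const p).mul_const _
  have hsumfun : (∑ k, X k) = fun ω => ∑ k, X k ω := by
    funext ω; simp [Finset.sum_apply]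
  have hXbound : ∀ k ω, |X k ω| ≤ |c k| := by
    intro k ω
    have h1 : |δ k ω - p| ≤ 1 := by
      rcases hval k ω with h | h <;> rw [h, abs_le] <;> constructor <;> linarith
    calc |X k ω| = |δ k ω - p| * |c k| := abs_mul _ _
      _ ≤ 1 * |c k| := mul_le_mul_of_nonneg_right h1 (abs_nonneg _)
      _ = |c k| := one_mul _
  have hsX : ∀ k ω, s * X k ω ≤ 9 / 16 := by
    intro k ω
    calc s * X k ω ≤ s * |X k ω| := mul_le_mul_of_nonneg_left (le_abs_self _) hs
      _ ≤ s * |c k| := mul_le_mul_of_nonneg_left (hXbound k ω) hs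
      _ ≤ 9 / 16 := hsc k
  have hXindep : iIndepFun X μm :=
    hindep.comp (fun k => fun x => (x - p) * c k)
      (fun k => (measurable_id.sub_const p).mul_const _)
  have hintsum : Integrable (fun ω => Real.exp (s * (∑ k, X k) ω)) μm := by
    rw [hsumfun]
    have hm : Measurable (fun ω => ∑ k, X k ω) :=
      Finset.measurable_sum Finset.univ (fun k _ => hXmeas k)
    refine Integrable.mono' (integrable_const (Real.exp ((n : ℝ) * (9 / 16))))
      ((hm.const_mul s).exp.aestronglyMeasurable) ?_
    filter_upwards with ω
    rw [Real.norm_eq_abs, abs_of_pos (Real.exp_pos _), Real.exp_le_exp, Finset.mul_sum]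
    calc ∑ k, s * X k ω ≤ ∑ _k : Fin n, (9 : ℝ) / 16 :=
          Finset.sum_le_sum (fun k _ => hsX k ω)
      _ = (n : ℝ) * (9 / 16) := by simp [Finset.sum_const, mul_comm]
  have hset : {ω | t ≤ ∑ k, (δ k ω - p) * c k} = {ω | t ≤ (∑ k, X k) ω} := by
    ext ω; rw [hsumfun]
  have hcher := measure_ge_le_exp_mul_mgf (μ := μm) (X := ∑ k, X k) t hs hintsum
  rw [hset]
  refine hcher.trans ?_
  rw [hXindep.mgf_sum hXmeas Finset.univ]
  have hfac : ∀ k, mgf (X k) μm s ≤ Real.exp ((5 / 8) * s ^ 2 * p * (c k) ^ 2) := by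
    intro k
    have hd : ∀ ω, Real.exp (s * X k ω)
        = Real.exp (-(s * p * c k))
          + (Real.exp (s * (1 - p) * c k) - Real.exp (-(s * p * c k))) * δ k ω := by
      intro ω
      rcases hval k ω with h | h <;> simp only [hX, h] <;> ring_nf
    have hdint : Integrable (fun ω => δ k ω) μm := by
      refine Integrable.mono' (integrable_const 1) (hmeas k).aestronglyMeasurable ?_
      filter_upwards with ω
      rcases hval k ω with h | h <;> simp [h]
    have hint_val : ∫ ω, δ k ω ∂μm = p :=
      delta_integral μm hp0 (δ k) (hmeas k) (hval k) (hber k)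
    have hmgf : mgf (X k) μm s
        = Real.exp (-(s * p * c k))
          + (Real.exp (s * (1 - p) * c k) - Real.exp (-(s * p * c k))) * p := by
      rw [mgf]
      simp_rw [hd]
      rw [integral_add (integrable_const _) (hdint.const_mul _), integral_const,
        integral_const_mul, hint_val]
      simp
    rw [hmgf]
    set x₀ : ℝ := -(s * p * c k) with hx0
    set x₁ : ℝ := s * (1 - p) * c k with hx1
    have hsc' : s * |c k| ≤ 9 / 16 := hsc k
    have habs0 : |x₀| ≤ 9 / 16 := by
      rw [hx0, abs_neg]
      have h : |s * p * c k| = s * p * |c k| := by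
        rw [abs_mul, abs_of_nonneg (mul_nonneg hs hp0)]
      rw [h]
      nlinarith [abs_nonneg (c k), mul_nonneg hs (abs_nonneg (c k))]
    have habs1 : |x₁| ≤ 9 / 16 := by
      rw [hx1]
      have h : |s * (1 - p) * c k| = s * (1 - p) * |c k| := by
        rw [abs_mul, abs_of_nonneg (mul_nonneg hs (by linarith))]
      rw [h]
      nlinarith [abs_nonneg (c k), mul_nonneg hs (abs_nonneg (c k))]
    have hlin : (1 - p) * x₀ + p * x₁ = 0 := by rw [hx0, hx1]; ring
    have hquad : (1 - p) * x₀ ^ 2 + p * x₁ ^ 2 ≤ s ^ 2 * p * c k ^ 2 := by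
      have h : (1 - p) * x₀ ^ 2 + p * x₁ ^ 2 = s ^ 2 * c k ^ 2 * (p * (1 - p)) := by
        rw [hx0, hx1]; ring
      rw [h]
      nlinarith [sq_nonneg (s * c k), sq_nonneg p]
    have h2 := two_point_bound p x₀ x₁ (s ^ 2 * p * c k ^ 2) hp0 hp1 habs0 habs1 hlin hquad
    calc Real.exp x₀ + (Real.exp x₁ - Real.exp x₀) * p
        = (1 - p) * Real.exp x₀ + p * Real.exp x₁ := by ring
      _ ≤ Real.exp (5 / 8 * (s ^ 2 * p * c k ^ 2)) := h2
      _ = Real.exp (5 / 8 * s ^ 2 * p * c k ^ 2) := by ring_nf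
  calc Real.exp (-s * t) * ∏ k, mgf (X k) μm s
      ≤ Real.exp (-s * t) * ∏ k, Real.exp ((5 / 8) * s ^ 2 * p * (c k) ^ 2) := by
        apply mul_le_mul_of_nonneg_left _ (Real.exp_pos _).le
        exact Finset.prod_le_prod (fun k _ => mgf_nonneg) (fun k _ => hfac k)
    _ = Real.exp (-s * t + (5 / 8) * s ^ 2 * p * (∑ k, (c k) ^ 2)) := by
        rw [← Real.exp_sum, ← Real.exp_add, ← Finset.mul_sum]

set_option maxHeartbeats 1600000 in
theorem sampled_vector_norm {Ω : Type*} [MeasurableSpace Ω] (μm : Measure Ω)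
    [IsProbabilityMeasure μm]
    (n : ℕ) (hn : 0 < n) (p : ℝ)
    (a : Fin n → ℝ) (ha : a ≠ 0)
    (δ : Fin n → Ω → ℝ)
    (hmeas : ∀ k, Measurable (δ k))
    (hval : ∀ k ω, δ k ω = 0 ∨ δ k ω = 1)
    (hber : ∀ k, μm {ω | δ k ω = 1} = ENNReal.ofReal p)
    (hindep : iIndepFun δ μm)
    (b : Ω → Fin n → ℝ) (hb : ∀ ω k, b ω k = δ k ω * a k)
    (hp : (256 / 9) * ((⨆ k, |a k|) ^ 2 / (∑ k, a k ^ 2)) ≤ p) :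
    ENNReal.ofReal 0.996 ≤
      μm {ω | Real.sqrt p / 2 * Real.sqrt (∑ k, a k ^ 2) ≤ Real.sqrt (∑ k, b ω k ^ 2) ∧
              Real.sqrt (∑ k, b ω k ^ 2) ≤ Real.sqrt (7 * p) / 2 * Real.sqrt (∑ k, a k ^ 2)} := by
  classical
  have hne : Nonempty (Fin n) := ⟨⟨0, hn⟩⟩
  set S : ℝ := ∑ k, a k ^ 2 with hSdef
  set M : ℝ := ⨆ k, |a k| with hMdef
  obtain ⟨k₀, hk₀⟩ : ∃ k, a k ≠ 0 := by
    by_contra h; push_neg at h; exact ha (funext h)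
  have hS0 : 0 < S :=
    Finset.sum_pos' (fun k _ => sq_nonneg _) ⟨k₀, Finset.mem_univ _, by positivity⟩
  have hbdd : BddAbove (Set.range fun k => |a k|) := Set.Finite.bddAbove (Set.finite_range _)
  have hMk : ∀ k, |a k| ≤ M := fun k => le_ciSup hbdd k
  have hM0 : 0 < M := lt_of_lt_of_le (abs_pos.2 hk₀) (hMk k₀)
  have hp0 : 0 < p := lt_of_lt_of_le (by positivity) hp
  have hp1 : p ≤ 1 := by
    have h1 : ENNReal.ofReal p ≤ 1 := (hber ⟨0, hn⟩) ▸ prob_le_one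
    exact ENNReal.ofReal_le_one.1 h1
  have hM2 : (256 / 9) * M ^ 2 ≤ p * S := by
    have h1 := mul_le_mul_of_nonneg_right hp hS0.le
    have h2 : M ^ 2 / S * S = M ^ 2 := div_mul_cancel₀ _ hS0.ne'
    nlinarith [h1, h2]
  set R : ℝ := Real.sqrt (p * S) with hRdef
  have hR0 : 0 < R := Real.sqrt_pos.2 (by positivity)
  have hR2 : R ^ 2 = p * S := Real.sq_sqrt (by positivity)
  have hMR : M ≤ 3 / 16 * R := by
    have h1 : M = Real.sqrt (M ^ 2) := (Real.sqrt_sq hM0.le).symm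
    rw [h1]
    calc Real.sqrt (M ^ 2) ≤ Real.sqrt ((3 / 16) ^ 2 * (p * S)) := by
          apply Real.sqrt_le_sqrt; nlinarith [hM2]
      _ = 3 / 16 * R := by
          rw [Real.sqrt_mul (by positivity), Real.sqrt_sq (by norm_num)]
  set s : ℝ := 3 / (M * R) with hsdef
  set t : ℝ := 4 * (M * R) with htdef
  have hs0 : 0 < s := by positivity
  have hst : s * t = 12 := by
    rw [hsdef, htdef]; field_simp; ring
  have hsM2 : s * M ^ 2 = 3 * M / R := by
    rw [hsdef]; field_simp
  have hsM2le : s * M ^ 2 ≤ 9 / 16 := by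
    rw [hsM2, div_le_iff₀ hR0]; nlinarith [hMR]
  have haM : ∀ k, a k ^ 2 ≤ M ^ 2 := by
    intro k
    have := hMk k
    nlinarith [abs_nonneg (a k), sq_abs (a k)]
  have hsc : ∀ k, s * |a k ^ 2| ≤ 9 / 16 := by
    intro k
    rw [abs_of_nonneg (sq_nonneg _)]
    calc s * a k ^ 2 ≤ s * M ^ 2 := mul_le_mul_of_nonneg_left (haM k) hs0.le
      _ ≤ 9 / 16 := hsM2le
  have hsum4 : ∑ k, (a k ^ 2) ^ 2 ≤ M ^ 2 * S := by
    rw [hSdef, Finset.mul_sum]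
    apply Finset.sum_le_sum
    intro k _
    have := haM k
    nlinarith [sq_nonneg (a k)]
  have hexparg : ∀ A : ℝ, A ≤ M ^ 2 * S →
      Real.exp (-s * t + 5 / 8 * s ^ 2 * p * A) ≤ 1 / 500 := by
    intro A hA
    have hs2 : s ^ 2 * p * (M ^ 2 * S) = 9 := by
      rw [hsdef]
      have : (3 / (M * R)) ^ 2 * p * (M ^ 2 * S) = 9 * (p * S) / R ^ 2 := by
        field_simp; ring
      rw [this, hR2]; field_simp
    have harg : -s * t + 5 / 8 * s ^ 2 * p * A ≤ -(51 / 8) := by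
      have h1 : 5 / 8 * s ^ 2 * p * A ≤ 5 / 8 * s ^ 2 * p * (M ^ 2 * S) := by
        apply mul_le_mul_of_nonneg_left hA (by positivity)
      nlinarith [h1, hs2, hst]
    calc Real.exp (-s * t + 5 / 8 * s ^ 2 * p * A) ≤ Real.exp (-(51 / 8)) :=
          Real.exp_le_exp.2 harg
      _ ≤ 1 / 500 := exp_num_bound
  -- the two tails
  have htail1 := chernoff_aux μm hp0.le hp1 δ hmeas hval hber hindep
    (fun k => a k ^ 2) s hs0.le hsc t
  have htail2 := chernoff_aux μm hp0.le hp1 δ hmeas hval hber hindep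
    (fun k => -(a k ^ 2)) s hs0.le (fun k => by simpa using hsc k) t
  have hb1 : (μm {ω | t ≤ ∑ k, (δ k ω - p) * a k ^ 2}).toReal ≤ 1 / 500 := by
    refine le_trans ?_ (hexparg (∑ k, (a k ^ 2) ^ 2) hsum4)
    simpa using htail1
  have hb2 : (μm {ω | t ≤ ∑ k, (δ k ω - p) * -(a k ^ 2)}).toReal ≤ 1 / 500 := by
    refine le_trans ?_ (hexparg (∑ k, (a k ^ 2) ^ 2) hsum4)
    simpa using htail2
  set T₁ : Set Ω := {ω | t ≤ ∑ k, (δ k ω - p) * a k ^ 2} with hT1def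
  set T₂ : Set Ω := {ω | t ≤ ∑ k, (δ k ω - p) * -(a k ^ 2)} with hT2def
  set E : Set Ω := {ω | Real.sqrt p / 2 * Real.sqrt S ≤ Real.sqrt (∑ k, b ω k ^ 2) ∧
              Real.sqrt (∑ k, b ω k ^ 2) ≤ Real.sqrt (7 * p) / 2 * Real.sqrt S} with hEdef
  have hbsum : ∀ ω, ∑ k, b ω k ^ 2 = p * S + ∑ k, (δ k ω - p) * a k ^ 2 := by
    intro ω
    have h1 : ∀ k, b ω k ^ 2 = (δ k ω - p) * a k ^ 2 + p * a k ^ 2 := by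
      intro k
      rcases hval k ω with h | h <;> rw [hb ω k, h] <;> ring
    rw [Finset.sum_congr rfl (fun k _ => h1 k), Finset.sum_add_distrib, ← Finset.mul_sum]
    rw [← hSdef]; ring
  have htle : t ≤ 3 / 4 * (p * S) := by
    rw [htdef, ← hR2]
    nlinarith [hMR, hR0]
  have hsub : Set.univ ⊆ E ∪ (T₁ ∪ T₂) := by
    intro ω _
    by_cases h1 : ω ∈ T₁
    · exact Or.inr (Or.inl h1)
    by_cases h2 : ω ∈ T₂
    · exact Or.inr (Or.inr h2)
    left
    rw [hT1def, Set.mem_setOf_eq, not_le] at h1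
    rw [hT2def, Set.mem_setOf_eq, not_le] at h2
    have hz2 : -(∑ k, (δ k ω - p) * a k ^ 2) < t := by
      have : ∑ k, (δ k ω - p) * -(a k ^ 2) = -(∑ k, (δ k ω - p) * a k ^ 2) := by
        rw [← Finset.sum_neg_distrib]; apply Finset.sum_congr rfl; intro k _; ring
      linarith [this ▸ h2]
    have hlow : p * S / 4 ≤ ∑ k, b ω k ^ 2 := by rw [hbsum ω]; nlinarith [htle]
    have hhigh : ∑ k, b ω k ^ 2 ≤ 7 * (p * S) / 4 := by rw [hbsum ω]; nlinarith [htle]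
    constructor
    · have h4 : Real.sqrt (p * S / 4) ≤ Real.sqrt (∑ k, b ω k ^ 2) := Real.sqrt_le_sqrt hlow
      have h5 : Real.sqrt (p * S / 4) = Real.sqrt p / 2 * Real.sqrt S := by
        rw [show p * S / 4 = (1/2)^2 * (p * S) by ring, Real.sqrt_mul (by norm_num),
          Real.sqrt_sq (by norm_num), Real.sqrt_mul hp0.le]
        ring
      rw [← h5]; exact h4
    · have h4 : Real.sqrt (∑ k, b ω k ^ 2) ≤ Real.sqrt (7 * (p * S) / 4) :=
        Real.sqrt_le_sqrt hhigh
      have h5 : Real.sqrt (7 * (p * S) / 4) = Real.sqrt (7 * p) / 2 * Real.sqrt S := by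
        rw [show 7 * (p * S) / 4 = (1/2)^2 * (7 * p * S) by ring, Real.sqrt_mul (by norm_num),
          Real.sqrt_sq (by norm_num), Real.sqrt_mul (by positivity)]
        ring
      rw [h5] at h4; exact h4
  -- measure arithmetic
  have hμT1 : μm T₁ ≤ ENNReal.ofReal (1 / 500) := by
    rw [← ENNReal.ofReal_toReal (measure_ne_top μm T₁)]
    exact ENNReal.ofReal_le_ofReal hb1
  have hμT2 : μm T₂ ≤ ENNReal.ofReal (1 / 500) := by
    rw [← ENNReal.ofReal_toReal (measure_ne_top μm T₂)]
    exact ENNReal.ofReal_le_ofReal hb2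
  have hone : (1 : ENNReal) ≤ μm E + ENNReal.ofReal (2 / 500) := by
    calc (1 : ENNReal) = μm Set.univ := measure_univ.symm
      _ ≤ μm (E ∪ (T₁ ∪ T₂)) := measure_mono hsub
      _ ≤ μm E + μm (T₁ ∪ T₂) := measure_union_le _ _
      _ ≤ μm E + (μm T₁ + μm T₂) := by gcongr; exact measure_union_le _ _
      _ ≤ μm E + (ENNReal.ofReal (1 / 500) + ENNReal.ofReal (1 / 500)) := by gcongr
      _ = μm E + ENNReal.ofReal (2 / 500) := by
          rw [← ENNReal.ofReal_add (by norm_num) (by norm_num)]; norm_num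
  have hgoal : ENNReal.ofReal 0.996 ≤ μm E := by
    have h2 : (1 : ENNReal) - ENNReal.ofReal (2 / 500) ≤ μm E := by
      rw [tsub_le_iff_right]; exact hone
    refine le_trans ?_ h2
    rw [show (1 : ENNReal) = ENNReal.ofReal 1 by simp,
      ← ENNReal.ofReal_sub _ (by norm_num : (0:ℝ) ≤ 2 / 500)]
    norm_num
  exact hgoal
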